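/- Let G = (V, E) be a finite undirected graph with V = {1,…,n} and construct the bipartite graph G' on I = {1,…,n} and J = {n+1,…,2n} with edges {u, n+v} and {v, n+u} for every edge {u,v} ∈ E, plus {v, n+v} for every v ∈ V. Then V' ⊆ V is a dominating set of G if and only if the indicator vector x of V' (x_i = 1 iff i ∈ V') satisfies: for every nonempty S ⊆ J, there exists i ∈ N_{G'}(S) with x_i = 1. -/
import Mathlib


open Finset

/-- The bipartite graph G' has locations I = V and regions J = a copy of V;
location i is adjacent to region j iff i and j are adjacent in G or i = j. -/
theorem stmt_15 {V : Type*} [Fintype V] [DecidableEq V]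
    (G : SimpleGraph V) (V' : Finset V) :
    (∀ u : V, u ∉ V' → ∃ v ∈ V', G.Adj u v) ↔
    (∀ S : Finset V, S.Nonempty →
      ∃ i : V, (∃ j ∈ S, G.Adj i j ∨ i = j) ∧ i ∈ V') := by
  constructor
  · intro h S ⟨j, hj⟩
    by_cases hjV : j ∈ V'
    · exact ⟨j, ⟨j, hj, Or.inr rfl⟩, hjV⟩
    · obtain ⟨v, hv, hadj⟩ := h j hjV
      exact ⟨v, ⟨j, hj, Or.inl hadj.symm⟩, hv⟩
  · intro h u hu
    obtain ⟨i, ⟨j, hj, hij⟩, hi⟩ := h {u} ⟨u, mem_singleton_self u⟩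
    rw [mem_singleton] at hj
    subst hj
    rcases hij with hadj | rfl
    · exact ⟨i, hi, hadj.symm⟩
    · exact absurd hi hu
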